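/- arXiv:2007.06538 — 3 statements merged into one kernel-verified Lean document; each statement's English description precedes it below -/
import Mathlib

section
/- Let σ ∈ S_6 have cycle type (3,3) (two disjoint 3-cycles and no fixed points), and let a ∈ (ℤ/2)^6. Let H be either W_6 or the subgroup K_6 ⋊ S_6, and suppose (a,σ) ∈ H. Then the conjugacy class of (a,σ) in H is of type D. -/
/-- The action of a permutation `σ ∈ S_n` on a vector `a ∈ (ℤ/2)^n`:
`(σ · a)_i = a_{σ⁻¹ i}`. -/
def permAct {n : ℕ} (σ : Equiv.Perm (Fin n)) (a : Fin n → ZMod 2) : Fin n → ZMod 2 :=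
  fun i => a (σ⁻¹ i)

/-- The underlying set of the hyperoctahedral group `W n = (ℤ/2)^n ⋊ S_n`. -/
@[ext]
structure W (n : ℕ) where
  vec : Fin n → ZMod 2
  perm : Equiv.Perm (Fin n)

/-- Group structure of `W n`: `(a,σ)(b,μ) = (a + σ·b, σμ)`. -/
instance (n : ℕ) : Group (W n) where
  mul x y := ⟨x.vec + permAct x.perm y.vec, x.perm * y.perm⟩
  one := ⟨0, 1⟩
  inv x := ⟨permAct x.perm⁻¹ (-x.vec), x.perm⁻¹⟩
  mul_assoc x y z := by
    refine W.ext ?_ ?_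
    · show (x.vec + permAct x.perm y.vec) + permAct (x.perm * y.perm) z.vec
        = x.vec + permAct x.perm (y.vec + permAct y.perm z.vec)
      funext i
      simp [permAct, mul_inv_rev, Equiv.Perm.mul_apply, add_assoc]
    · exact mul_assoc _ _ _
  one_mul x := by
    refine W.ext ?_ ?_
    · show (0 : Fin n → ZMod 2) + permAct 1 x.vec = x.vec
      funext i; simp [permAct]
    · exact one_mul _
  mul_one x := by
    refine W.ext ?_ ?_
    · show x.vec + permAct x.perm 0 = x.vec
      funext i; simp [permAct]
    · exact mul_one _
  inv_mul_cancel x := by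
    refine W.ext ?_ ?_
    · show permAct x.perm⁻¹ (-x.vec) + permAct x.perm⁻¹ x.vec = 0
      funext i; simp [permAct]; exact CharTwo.add_self_eq_zero _
    · exact inv_mul_cancel _

@[simp] theorem W.mul_vec {n : ℕ} (x y : W n) :
    (x * y).vec = x.vec + permAct x.perm y.vec := rfl
@[simp] theorem W.mul_perm {n : ℕ} (x y : W n) :
    (x * y).perm = x.perm * y.perm := rfl
@[simp] theorem W.one_vec {n : ℕ} : (1 : W n).vec = 0 := rfl
@[simp] theorem W.one_perm {n : ℕ} : (1 : W n).perm = 1 := rfl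
@[simp] theorem W.inv_vec {n : ℕ} (x : W n) :
    (x⁻¹).vec = permAct x.perm⁻¹ (-x.vec) := rfl
@[simp] theorem W.inv_perm {n : ℕ} (x : W n) : (x⁻¹).perm = x.perm⁻¹ := rfl

/-- Conjugation `x ▷ y = x y x⁻¹` in a group. -/
def conjAct' {G : Type*} [Group G] (x y : G) : G := x * y * x⁻¹

/-- `sq(x,y) = x ▷ (y ▷ (x ▷ y))`. -/
def sqD {G : Type*} [Group G] (x y : G) : G := conjAct' x (conjAct' y (conjAct' x y))

/-- Conjugacy class of `x` in the group `G`. -/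
def conjClass {G : Type*} [Group G] (x : G) : Set G := {y | ∃ t : G, y = t * x * t⁻¹}

/-- A subset `O` of a group is of type D. -/
def IsTypeD {G : Type*} [Group G] (O : Set G) : Prop :=
  ∃ R S : Set G, R ⊆ O ∧ S ⊆ O ∧ R.Nonempty ∧ S.Nonempty ∧ Disjoint R S ∧
    (∀ r ∈ R, ∀ r' ∈ R, conjAct' r r' ∈ R) ∧
    (∀ s ∈ S, ∀ s' ∈ S, conjAct' s s' ∈ S) ∧
    (∀ r ∈ R, ∀ s ∈ S, conjAct' r s ∈ S ∧ conjAct' s r ∈ R) ∧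
    (∃ a ∈ R, ∃ b ∈ S, sqD a b ≠ b)

/-- The subgroup `K_n ⋊ S_n` of `W n`, where `K_n = {a : a_1 + ⋯ + a_n = 0}`. -/
def Ksub (n : ℕ) : Subgroup (W n) where
  carrier := {x | ∑ i, x.vec i = 0}
  one_mem' := by simp
  mul_mem' := by
    intro x y hx hy
    simp only [Set.mem_setOf_eq] at *
    rw [W.mul_vec]
    simp only [Pi.add_apply, Finset.sum_add_distrib, hx, zero_add, permAct]
    rw [Equiv.sum_comp x.perm⁻¹ y.vec]
    exact hy
  inv_mem' := by
    intro x hx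
    simp only [Set.mem_setOf_eq] at *
    rw [W.inv_vec]
    simp only [permAct, inv_inv, Pi.neg_apply]
    rw [Finset.sum_neg_distrib, Equiv.sum_comp x.perm x.vec, hx, neg_zero]


def ρ6 : Equiv.Perm (Fin 6) :=
  (Equiv.swap 0 1 * Equiv.swap 0 2) * (Equiv.swap 3 4 * Equiv.swap 3 5)
def β6 : Equiv.Perm (Fin 6) :=
  (Equiv.swap 0 1 * Equiv.swap 0 2) * (Equiv.swap 3 5 * Equiv.swap 3 4)
set_option maxRecDepth 4000 in
def δ6 : Fin 6 → ZMod 2 := ![0,1,1,0,1,1]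
set_option maxRecDepth 4000 in
def c6 : Fin 6 → ZMod 2 := ![0,0,1,0,0,1]

open Equiv Equiv.Perm in
theorem ρ6_ct : ρ6.cycleType = {3, 3} := by
  have hc1 : IsThreeCycle (Equiv.swap (0:Fin 6) 1 * Equiv.swap 0 2) :=
    isThreeCycle_swap_mul_swap_same (by decide) (by decide) (by decide)
  have hc2 : IsThreeCycle (Equiv.swap (3:Fin 6) 4 * Equiv.swap 3 5) :=
    isThreeCycle_swap_mul_swap_same (by decide) (by decide) (by decide)
  have hd : Equiv.Perm.Disjoint (Equiv.swap (0:Fin 6) 1 * Equiv.swap 0 2)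
      (Equiv.swap (3:Fin 6) 4 * Equiv.swap 3 5) := by intro x; fin_cases x <;> decide
  rw [ρ6, Equiv.Perm.Disjoint.cycleType_mul hd, hc1.cycleType, hc2.cycleType]
  rfl

open Equiv Equiv.Perm in
theorem β6_ct : β6.cycleType = {3, 3} := by
  have hc1 : IsThreeCycle (Equiv.swap (0:Fin 6) 1 * Equiv.swap 0 2) :=
    isThreeCycle_swap_mul_swap_same (by decide) (by decide) (by decide)
  have hc2 : IsThreeCycle (Equiv.swap (3:Fin 6) 5 * Equiv.swap 3 4) :=
    isThreeCycle_swap_mul_swap_same (by decide) (by decide) (by decide)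
  have hd : Equiv.Perm.Disjoint (Equiv.swap (0:Fin 6) 1 * Equiv.swap 0 2)
      (Equiv.swap (3:Fin 6) 5 * Equiv.swap 3 4) := by intro x; fin_cases x <;> decide
  rw [β6, Equiv.Perm.Disjoint.cycleType_mul hd, hc1.cycleType, hc2.cycleType]
  rfl

set_option maxRecDepth 10000 in
theorem rb_comm : ρ6 * β6 = β6 * ρ6 := by decide

set_option maxRecDepth 10000 in
theorem rb_ne : ρ6 ≠ β6 := by decide

set_option maxRecDepth 10000 in
theorem sq_key (u v : Fin 6 → ZMod 2) :
    (sqD (W.mk (u + δ6) ρ6) (W.mk v β6)).vec 1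
      = (sqD (W.mk u ρ6) (W.mk v β6)).vec 1 + 1 := by
  simp only [sqD, conjAct', W.mul_vec, W.mul_perm, W.inv_vec, W.inv_perm, permAct, Pi.add_apply,
    Pi.neg_apply]
  simp only [show ρ6⁻¹ (1:Fin 6) = 2 from by decide,
    show β6⁻¹ (2:Fin 6) = 0 from by decide,
    show ρ6⁻¹ (0:Fin 6) = 1 from by decide,
    show (ρ6*β6)⁻¹ (0:Fin 6) = 2 from by decide,
    show ρ6⁻¹⁻¹ (2:Fin 6) = 1 from by decide,
    show (β6*(ρ6*β6*ρ6⁻¹))⁻¹ (2:Fin 6) = 1 from by decide,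
    show β6⁻¹⁻¹ (1:Fin 6) = 0 from by decide,
    show (ρ6*(β6*(ρ6*β6*ρ6⁻¹)*β6⁻¹))⁻¹ (1:Fin 6) = 0 from by decide,
    show ρ6⁻¹⁻¹ (0:Fin 6) = 2 from by decide,
    show δ6 0 = 0 from rfl, show δ6 1 = 1 from rfl, show δ6 2 = 1 from rfl]
  simp only [CharTwo.neg_eq]
  ring_nf
  simp [show (3:ZMod 2)=1 from rfl, show (2:ZMod 2)=0 from rfl]

theorem conj_val (c : Fin 6 → ZMod 2) (τ : Equiv.Perm (Fin 6)) (x : W 6) :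
    (W.mk c τ) * x * (W.mk c τ)⁻¹
      = W.mk (c + permAct τ x.vec + permAct (τ * x.perm * τ⁻¹) c) (τ * x.perm * τ⁻¹) := by
  refine W.ext ?_ ?_
  · show c + permAct τ x.vec + permAct (τ * x.perm) (permAct τ⁻¹ (-c)) = _
    funext i
    simp [permAct, mul_inv_rev, Equiv.Perm.mul_apply, CharTwo.neg_eq]
  · simp

theorem c6_key : ∀ i, c6 i + c6 (ρ6⁻¹ i) = δ6 i := by decide

/-- for `σ ∈ S_6` of cycle type `(3,3)`, the conjugacy class of
`(a,σ)` in `H` (where `H` is `W 6` or `K_6 ⋊ S_6`) is of type D. -/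
theorem typeD_33 (σ : Equiv.Perm (Fin 6)) (hσ : σ.cycleType = {3, 3})
    (a : Fin 6 → ZMod 2)
    (H : Subgroup (W 6)) (hH : H = ⊤ ∨ H = Ksub 6)
    (hw : W.mk a σ ∈ H) :
    IsTypeD (conjClass (⟨W.mk a σ, hw⟩ : H)) := by
  obtain ⟨τ₁, hτ₁⟩ := isConj_iff.mp (Equiv.Perm.isConj_of_cycleType_eq (hσ.trans ρ6_ct.symm))
  obtain ⟨τ₂, hτ₂⟩ := isConj_iff.mp (Equiv.Perm.isConj_of_cycleType_eq (hσ.trans β6_ct.symm))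
  have hmem : ∀ (c : Fin 6 → ZMod 2), (∑ i, c i) = 0 → ∀ τ, W.mk c τ ∈ H := by
    intro c hc τ
    rcases hH with rfl | rfl
    · trivial
    · exact hc
  set x : H := ⟨W.mk a σ, hw⟩ with hx
  -- coercion lemmas
  have hcoe3 : ∀ y z : H, ((y * z * y⁻¹ : H) : W 6) = (y : W 6) * (z : W 6) * (y : W 6)⁻¹ :=
    fun _ _ => rfl
  have hpconj : ∀ y z : H, ((conjAct' y z : H) : W 6).perm
      = (y : W 6).perm * (z : W 6).perm * ((y : W 6).perm)⁻¹ := fun _ _ => rfl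
  have hconjCl : ∀ (y z : H), z ∈ conjClass x → conjAct' y z ∈ conjClass x := by
    rintro y z ⟨t, rfl⟩
    exact ⟨y * t, by rw [conjAct']; group⟩
  set t0 : H := ⟨W.mk 0 τ₁, hmem 0 (by simp) τ₁⟩ with ht0
  set t1 : H := ⟨W.mk c6 τ₁, hmem c6 (by decide) τ₁⟩ with ht1
  set t2 : H := ⟨W.mk 0 τ₂, hmem 0 (by simp) τ₂⟩ with ht2
  set r₀ : H := t0 * x * t0⁻¹ with hr₀d
  set r₁ : H := t1 * x * t1⁻¹ with hr₁d
  set s₀ : H := t2 * x * t2⁻¹ with hs₀d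
  have hr₀ : (r₀ : W 6) = W.mk (permAct τ₁ a) ρ6 := by
    rw [hr₀d, hcoe3, ht0]
    show (W.mk 0 τ₁) * (W.mk a σ) * (W.mk 0 τ₁)⁻¹ = _
    rw [conj_val, show τ₁ * (W.mk a σ).perm * τ₁⁻¹ = ρ6 from hτ₁]
    refine W.ext ?_ rfl
    funext i
    simp [permAct]
  have hr₁ : (r₁ : W 6) = W.mk (permAct τ₁ a + δ6) ρ6 := by
    rw [hr₁d, hcoe3, ht1]
    show (W.mk c6 τ₁) * (W.mk a σ) * (W.mk c6 τ₁)⁻¹ = _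
    rw [conj_val, show τ₁ * (W.mk a σ).perm * τ₁⁻¹ = ρ6 from hτ₁]
    refine W.ext ?_ rfl
    funext i
    show c6 i + permAct τ₁ a i + permAct ρ6 c6 i = permAct τ₁ a i + δ6 i
    have h := c6_key i
    show c6 i + permAct τ₁ a i + c6 (ρ6⁻¹ i) = permAct τ₁ a i + δ6 i
    rw [← h]
    ring
  have hs₀ : (s₀ : W 6) = W.mk (permAct τ₂ a) β6 := by
    rw [hs₀d, hcoe3, ht2]
    show (W.mk 0 τ₂) * (W.mk a σ) * (W.mk 0 τ₂)⁻¹ = _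
    rw [conj_val, show τ₂ * (W.mk a σ).perm * τ₂⁻¹ = β6 from hτ₂]
    refine W.ext ?_ rfl
    funext i
    simp [permAct]
  refine ⟨{y | y ∈ conjClass x ∧ (y : W 6).perm = ρ6},
    {y | y ∈ conjClass x ∧ (y : W 6).perm = β6},
    fun y hy => hy.1, fun y hy => hy.1, ⟨r₀, ⟨t0, hr₀d⟩, by rw [hr₀]⟩,
    ⟨s₀, ⟨t2, hs₀d⟩, by rw [hs₀]⟩, ?_, ?_, ?_, ?_, ?_⟩
  · exact Set.disjoint_left.mpr fun y hyR hyS => rb_ne (hyR.2.symm.trans hyS.2)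
  · intro r hr r' hr'
    refine ⟨hconjCl r r' hr'.1, ?_⟩
    rw [hpconj, hr.2, hr'.2]
    group
  · intro s hs s' hs'
    refine ⟨hconjCl s s' hs'.1, ?_⟩
    rw [hpconj, hs.2, hs'.2]
    group
  · intro r hr s hs
    constructor
    · refine ⟨hconjCl r s hs.1, ?_⟩
      rw [hpconj, hr.2, hs.2, rb_comm]
      simp [mul_assoc]
    · refine ⟨hconjCl s r hr.1, ?_⟩
      rw [hpconj, hr.2, hs.2, ← rb_comm]
      simp [mul_assoc]
  · have hcoesq : ∀ y z : H, ((sqD y z : H) : W 6) = sqD (y : W 6) (z : W 6) :=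
      fun _ _ => rfl
    by_cases hc : sqD r₀ s₀ = s₀
    · refine ⟨r₁, ⟨⟨t1, hr₁d⟩, by rw [hr₁]⟩, s₀, ⟨⟨t2, hs₀d⟩, by rw [hs₀]⟩, fun hcon => ?_⟩
      have e0 : sqD (W.mk (permAct τ₁ a) ρ6) (W.mk (permAct τ₂ a) β6)
          = W.mk (permAct τ₂ a) β6 := by
        rw [← hr₀, ← hs₀, ← hcoesq]
        exact congrArg Subtype.val hc
      have e1 : sqD (W.mk (permAct τ₁ a + δ6) ρ6) (W.mk (permAct τ₂ a) β6)
          = W.mk (permAct τ₂ a) β6 := by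
        rw [← hr₁, ← hs₀, ← hcoesq]
        exact congrArg Subtype.val hcon
      have hk := sq_key (permAct τ₁ a) (permAct τ₂ a)
      rw [e0, e1] at hk
      simpa using hk
    · exact ⟨r₀, ⟨⟨t0, hr₀d⟩, by rw [hr₀]⟩, s₀, ⟨⟨t2, hs₀d⟩, by rw [hs₀]⟩, hc⟩
end

section
/- Let σ ∈ S_7 have cycle type (2,2,3) (two disjoint transpositions and a disjoint 3-cycle, no fixed points), and let a ∈ (ℤ/2)^7. Let H be either W_7 or the subgroup K_7 ⋊ S_7, and suppose (a,σ) ∈ H. Then the conjugacy class of (a,σ) in H is of type D. -/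
/-! ### Auxiliary material for the proof -/

open Equiv

section Aux

lemma conjClass_self {G : Type*} [Group G] (x : G) : x ∈ conjClass x := ⟨1, by group⟩

lemma conjClass_conj_eq {G : Type*} [Group G] (g x : G) :
    conjClass (g * x * g⁻¹) = conjClass x := by
  ext y; constructor
  · rintro ⟨t, rfl⟩; exact ⟨t * g, by group⟩
  · rintro ⟨t, rfl⟩; exact ⟨t * g⁻¹, by group⟩

lemma isTypeD_of_hom {G Q : Type*} [Group G] [Group Q] (φ : G →* Q) (x r s : G)
    (hr : r ∈ conjClass x) (hs : s ∈ conjClass x)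
    (hne : φ r ≠ φ s) (hcomm : φ r * φ s = φ s * φ r)
    (hsq : sqD r s ≠ s) : IsTypeD (conjClass x) := by
  have hconjmem : ∀ (g y : G), y ∈ conjClass x → conjAct' g y ∈ conjClass x := by
    rintro g y ⟨t, rfl⟩
    exact ⟨g * t, by simp [conjAct', mul_assoc]⟩
  have hφconj : ∀ g y : G, φ (conjAct' g y) = φ g * φ y * (φ g)⁻¹ := by
    intro g y; simp [conjAct']
  refine ⟨{y | y ∈ conjClass x ∧ φ y = φ r}, {y | y ∈ conjClass x ∧ φ y = φ s},
    fun y hy => hy.1, fun y hy => hy.1, ⟨r, hr, rfl⟩, ⟨s, hs, rfl⟩, ?_, ?_, ?_, ?_,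
    ⟨r, ⟨hr, rfl⟩, s, ⟨hs, rfl⟩, hsq⟩⟩
  · rw [Set.disjoint_left]
    rintro y ⟨-, h1⟩ ⟨-, h2⟩
    exact hne (h1.symm.trans h2)
  · rintro r1 ⟨hr1, e1⟩ r2 ⟨hr2, e2⟩
    exact ⟨hconjmem _ _ hr2, by rw [hφconj, e1, e2, mul_inv_cancel_right]⟩
  · rintro s1 ⟨hs1, e1⟩ s2 ⟨hs2, e2⟩
    exact ⟨hconjmem _ _ hs2, by rw [hφconj, e1, e2, mul_inv_cancel_right]⟩
  · rintro r1 ⟨hr1, e1⟩ s1 ⟨hs1, e2⟩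
    refine ⟨⟨hconjmem _ _ hs1, ?_⟩, ⟨hconjmem _ _ hr1, ?_⟩⟩
    · rw [hφconj, e1, e2, hcomm, mul_inv_cancel_right]
    · rw [hφconj, e1, e2, ← hcomm, mul_inv_cancel_right]

/-- The projection `W n →* S_n`. -/
def Wperm (n : ℕ) : W n →* Equiv.Perm (Fin n) where
  toFun x := x.perm
  map_one' := rfl
  map_mul' _ _ := rfl

@[simp] lemma permAct_zero {n : ℕ} (σp : Equiv.Perm (Fin n)) : permAct σp 0 = 0 := rfl
@[simp] lemma permAct_one {n : ℕ} (v : Fin n → ZMod 2) : permAct 1 v = v := rfl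

lemma mem_Ksub (x : W 7) : x ∈ Ksub 7 ↔ ∑ i, x.vec i = 0 := Iff.rfl

lemma conj_eq {n : ℕ} (b a : Fin n → ZMod 2) (π σp : Equiv.Perm (Fin n)) :
    W.mk b π * W.mk a σp * (W.mk b π)⁻¹ =
      W.mk (b + permAct π a + permAct (π * σp * π⁻¹) b) (π * σp * π⁻¹) := by
  refine W.ext ?_ rfl
  show (W.mk b π * W.mk a σp).vec + permAct (π * σp) ((W.mk b π)⁻¹).vec = _
  funext i
  simp [permAct, Equiv.Perm.mul_apply, mul_inv_rev, Pi.neg_apply, CharTwo.neg_eq]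

def s1 : Perm (Fin 7) := Equiv.swap 0 1
def s2 : Perm (Fin 7) := Equiv.swap 2 3
def c3 : Perm (Fin 7) := [(4:Fin 7),5,6].formPerm
def sig0 : Perm (Fin 7) := s1 * s2 * c3
def pis : Perm (Fin 7) := Equiv.swap 1 2
def e4 : Fin 7 → ZMod 2 := fun i => if i = 4 then 1 else 0
def onesv : Fin 7 → ZMod 2 := fun _ => 1

theorem hct : sig0.cycleType = {2,2,3} := by
  have hd : ∀ (f g : Perm (Fin 7)), (∀ x, f x = x ∨ g x = x) → f.Disjoint g := fun f g h => h
  have h := Equiv.Perm.cycleType_eq (σ := sig0) [s1, s2, c3] (by decide)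
    (by
      intro τ hτ
      fin_cases hτ
      · exact Equiv.Perm.isCycle_swap (by decide)
      · exact Equiv.Perm.isCycle_swap (by decide)
      · exact List.isCycle_formPerm (by decide) (by decide))
    (by
      refine List.Pairwise.cons ?_ (List.Pairwise.cons ?_ (List.pairwise_singleton _ _))
      · intro g hg; fin_cases hg
        · exact hd _ _ (by decide)
        · exact hd _ _ (by decide)
      · intro g hg; fin_cases hg
        exact hd _ _ (by decide))
  rw [h]; decide

def Qk (a b : Fin 7 → ZMod 2) : Prop :=
  (sqD (W.mk a sig0) (W.mk b pis * W.mk a sig0 * (W.mk b pis)⁻¹)).vec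
    ≠ (W.mk b pis * W.mk a sig0 * (W.mk b pis)⁻¹).vec

instance (a b : Fin 7 → ZMod 2) : Decidable (Qk a b) := by unfold Qk; infer_instance

def bred (a : Fin 7 → ZMod 2) : Fin 7 → ZMod 2 :=
  fun i => if i = 0 then a 1 else if i = 2 then a 3 else
    if i = 4 then a 5 + a 6 else if i = 5 then a 6 else 0

def canon (x y z : ZMod 2) : Fin 7 → ZMod 2 :=
  fun i => if i = 0 then x else if i = 2 then y else if i = 4 then z else 0

set_option maxRecDepth 1000000 in
set_option maxHeartbeats 1000000 in
theorem red : ∀ a : Fin 7 → ZMod 2,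
    a + bred a + permAct sig0 (bred a) = canon (a 0 + a 1) (a 2 + a 3) (a 4 + a 5 + a 6) := by
  decide

set_option maxRecDepth 1000000 in
set_option maxHeartbeats 1000000 in
theorem key8 : ∀ x y z : ZMod 2,
    Qk (canon x y z) 0 ∨ (Qk (canon x y z) e4 ∧ Qk (canon x y z) (e4 + onesv)) := by
  decide

lemma add_ones (v w : Fin 7 → ZMod 2) :
    v + (w + onesv) + permAct sig0 (w + onesv) = v + w + permAct sig0 w := by
  funext i
  show v i + (w i + 1) + (w (sig0⁻¹ i) + 1) = v i + w i + w (sig0⁻¹ i)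
  exact (by decide : ∀ x y z : ZMod 2, x + (y + 1) + (z + 1) = x + y + z) _ _ _

lemma sum_ones_add (w : Fin 7 → ZMod 2) :
    ∑ i, (w + onesv) i = (∑ i, w i) + 1 := by
  show ∑ i, (w i + 1) = _
  rw [Finset.sum_add_distrib]
  norm_num [onesv]
  decide

lemma main_case (H : Subgroup (W 7)) (a2 : Fin 7 → ZMod 2) (hx : W.mk a2 sig0 ∈ H)
    (b2 : Fin 7 → ZMod 2) (hb2 : W.mk b2 pis ∈ H) (hQ : Qk a2 b2) :
    IsTypeD (conjClass (⟨W.mk a2 sig0, hx⟩ : H)) := by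
  have hsmem : W.mk b2 pis * W.mk a2 sig0 * (W.mk b2 pis)⁻¹ ∈ H :=
    mul_mem (mul_mem hb2 hx) (inv_mem hb2)
  apply isTypeD_of_hom ((Wperm 7).comp H.subtype) _ ⟨W.mk a2 sig0, hx⟩
      (⟨W.mk b2 pis * W.mk a2 sig0 * (W.mk b2 pis)⁻¹, hsmem⟩ : H)
  · exact conjClass_self _
  · exact ⟨⟨W.mk b2 pis, hb2⟩, Subtype.ext rfl⟩
  · show sig0 ≠ (W.mk b2 pis * W.mk a2 sig0 * (W.mk b2 pis)⁻¹).perm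
    simp only [W.mul_perm, W.inv_perm]
    decide
  · show sig0 * (W.mk b2 pis * W.mk a2 sig0 * (W.mk b2 pis)⁻¹).perm
        = (W.mk b2 pis * W.mk a2 sig0 * (W.mk b2 pis)⁻¹).perm * sig0
    simp only [W.mul_perm, W.inv_perm]
    decide
  · intro h
    exact hQ (congrArg (fun z : H => (z : W 7).vec) h)

lemma final (H : Subgroup (W 7)) (aa : Fin 7 → ZMod 2) (σ : Perm (Fin 7))
    (hw : W.mk aa σ ∈ H) (π0 : Perm (Fin 7)) (hc0 : π0 * σ * π0⁻¹ = sig0)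
    (hg1 : W.mk 0 π0 ∈ H)
    (b1 b2 : Fin 7 → ZMod 2) (hb1 : W.mk b1 1 ∈ H) (hb2 : W.mk b2 pis ∈ H)
    (hQ : Qk (permAct π0 aa + b1 + permAct sig0 b1) b2) :
    IsTypeD (conjClass (⟨W.mk aa σ, hw⟩ : H)) := by
  set a2 : Fin 7 → ZMod 2 := permAct π0 aa + b1 + permAct sig0 b1 with ha2
  have hx2val : W.mk b1 1 * (W.mk 0 π0 * W.mk aa σ * (W.mk 0 π0)⁻¹) * (W.mk b1 1)⁻¹
      = W.mk a2 sig0 := by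
    rw [conj_eq 0 aa π0 σ, hc0, conj_eq b1 _ 1 sig0]
    simp only [permAct_one, permAct_zero, one_mul, mul_one, inv_one, zero_add, add_zero]
    rw [show b1 + permAct π0 aa = permAct π0 aa + b1 from add_comm _ _]
  have hmem2 : W.mk a2 sig0 ∈ H := by
    rw [← hx2val]
    exact mul_mem (mul_mem hb1 (mul_mem (mul_mem hg1 hw) (inv_mem hg1))) (inv_mem hb1)
  have hsub : (⟨W.mk a2 sig0, hmem2⟩ : H)
      = (⟨W.mk b1 1, hb1⟩ : H) * ((⟨W.mk 0 π0, hg1⟩ : H) * ⟨W.mk aa σ, hw⟩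
          * (⟨W.mk 0 π0, hg1⟩ : H)⁻¹) * (⟨W.mk b1 1, hb1⟩ : H)⁻¹ :=
    Subtype.ext hx2val.symm
  have hcls : conjClass (⟨W.mk a2 sig0, hmem2⟩ : H) = conjClass (⟨W.mk aa σ, hw⟩ : H) := by
    rw [hsub, conjClass_conj_eq, conjClass_conj_eq]
  rw [← hcls]
  exact main_case H a2 hmem2 b2 hb2 hQ

end Aux

/-- for `σ ∈ S_7` of cycle type `(2,2,3)`, the conjugacy class of
`(a,σ)` in `H` (where `H` is `W 7` or `K_7 ⋊ S_7`) is of type D. -/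
theorem typeD_223 (σ : Equiv.Perm (Fin 7)) (hσ : σ.cycleType = {2, 2, 3})
    (a : Fin 7 → ZMod 2)
    (H : Subgroup (W 7)) (hH : H = ⊤ ∨ H = Ksub 7)
    (hw : W.mk a σ ∈ H) :
    IsTypeD (conjClass (⟨W.mk a σ, hw⟩ : H)) := by
  obtain ⟨π0, hc0⟩ := isConj_iff.mp (Equiv.Perm.isConj_iff_cycleType_eq.mpr (hσ.trans hct.symm))
  set a1 : Fin 7 → ZMod 2 := permAct π0 a with ha1
  obtain ⟨b1, hb1, hb1e⟩ : ∃ b1 : Fin 7 → ZMod 2, W.mk b1 1 ∈ H ∧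
      a1 + b1 + permAct sig0 b1 = canon (a1 0 + a1 1) (a1 2 + a1 3) (a1 4 + a1 5 + a1 6) := by
    rcases hH with rfl | rfl
    · exact ⟨bred a1, Subgroup.mem_top _, red a1⟩
    · rcases (by decide : ∀ z : ZMod 2, z = 0 ∨ z = 1) (∑ i, bred a1 i) with hp | hp
      · exact ⟨bred a1, (mem_Ksub _).mpr hp, red a1⟩
      · refine ⟨bred a1 + onesv, (mem_Ksub _).mpr ?_, ?_⟩
        · show ∑ i, (bred a1 + onesv) i = 0
          rw [sum_ones_add, hp]; decide
        · rw [add_ones]; exact red a1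
  obtain ⟨b2, hb2, hQ2⟩ : ∃ b2 : Fin 7 → ZMod 2, W.mk b2 pis ∈ H ∧
      Qk (canon (a1 0 + a1 1) (a1 2 + a1 3) (a1 4 + a1 5 + a1 6)) b2 := by
    rcases key8 (a1 0 + a1 1) (a1 2 + a1 3) (a1 4 + a1 5 + a1 6) with h | ⟨h4, h41⟩
    · refine ⟨0, ?_, h⟩
      rcases hH with rfl | rfl
      · exact Subgroup.mem_top _
      · exact (mem_Ksub _).mpr (by simp)
    · rcases hH with rfl | rfl
      · exact ⟨e4, Subgroup.mem_top _, h4⟩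
      · exact ⟨e4 + onesv, (mem_Ksub _).mpr (by decide), h41⟩
  have hg1 : W.mk 0 π0 ∈ H := by
    rcases hH with rfl | rfl
    · exact Subgroup.mem_top _
    · exact (mem_Ksub _).mpr (by simp)
  exact final H a σ hw π0 hc0 hg1 b1 b2 hb1 hb2 (by rw [hb1e]; exact hQ2)
end

section
/- Let n > 5 and let τ ∈ S_n have cycle type (1^{n-3}, 3) (a single 3-cycle). Let a ∈ (ℤ/2)^n and suppose there exist i, j with τ(i) = i, τ(j) = j and a_i ≠ a_j. Let H be either W_n or the subgroup K_n ⋊ S_n, and suppose (a,τ) ∈ H. Then the conjugacy class of (a,τ) in H is of type D. -/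
theorem perm_inv_apply_self {α : Type*} (σ : Equiv.Perm α) (x : α) : σ⁻¹ (σ x) = x :=
  Equiv.symm_apply_apply σ x

theorem perm_apply_inv_self {α : Type*} (σ : Equiv.Perm α) (x : α) : σ (σ⁻¹ x) = x :=
  Equiv.apply_symm_apply σ x

theorem zmod2_add_add (p q : ZMod 2) : p + (q + p) = q := by revert p q; decide

theorem conj_same_perm {n : ℕ} (ρ : Equiv.Perm (Fin n)) (f g : Fin n → ZMod 2) :
    conjAct' (W.mk f ρ) (W.mk g ρ) = W.mk (f + permAct ρ g + permAct ρ f) ρ := by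
  refine W.ext ?_ ?_
  · show (W.mk f ρ * W.mk g ρ * (W.mk f ρ)⁻¹).vec = _
    simp only [W.mul_vec, W.inv_vec, W.mul_perm, W.inv_perm]
    funext q
    simp only [Pi.add_apply, permAct, Pi.neg_apply, mul_inv_rev, Equiv.Perm.mul_apply,
      perm_inv_apply_self, perm_apply_inv_self, CharTwo.neg_eq, inv_inv]
  · show ρ * ρ * ρ⁻¹ = ρ
    group

theorem conj_fix {n : ℕ} (i : Fin n) (t w : W n) (ht : t.perm i = i) (hw : w.perm i = i) :
    (t * w * t⁻¹).vec i = w.vec i := by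
  have ht' : t.perm⁻¹ i = i := by apply t.perm.injective; simp [ht]
  have hw' : w.perm⁻¹ i = i := by apply w.perm.injective; simp [hw]
  simp only [W.mul_vec, W.inv_vec, W.mul_perm, W.inv_perm, Pi.add_apply, permAct,
    Pi.neg_apply, mul_inv_rev, Equiv.Perm.mul_apply, inv_inv, ht', hw', ht, CharTwo.neg_eq]
  rw [add_assoc]; exact zmod2_add_add _ _
theorem sq_same_perm {n : ℕ} (ρ : Equiv.Perm (Fin n)) (hρ : ∀ q, ρ (ρ (ρ q)) = q)
    (f g : Fin n → ZMod 2) :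
    sqD (W.mk f ρ) (W.mk g ρ) =
      W.mk (g + permAct ρ (f + g) + permAct (ρ * ρ) (f + g)) ρ := by
  have hρ' : ∀ q, ρ⁻¹ (ρ⁻¹ (ρ⁻¹ q)) = q := by
    intro q
    apply ρ.injective; apply ρ.injective; apply ρ.injective
    simp [hρ]
  rw [sqD, conj_same_perm, conj_same_perm, conj_same_perm]
  refine W.ext ?_ rfl
  funext q
  simp only [permAct, Pi.add_apply, mul_inv_rev, Equiv.Perm.mul_apply, hρ']
  generalize f q = p1
  generalize f (ρ⁻¹ q) = p2
  generalize f (ρ⁻¹ (ρ⁻¹ q)) = p3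
  generalize g q = q1
  generalize g (ρ⁻¹ q) = q2
  generalize g (ρ⁻¹ (ρ⁻¹ q)) = q3
  revert p1 p2 p3 q1 q2 q3
  decide
theorem conj_vec {n : ℕ} (t w : W n) : (t * w * t⁻¹).vec =
    fun q => t.vec q + w.vec (t.perm⁻¹ q) + t.vec (t.perm (w.perm⁻¹ (t.perm⁻¹ q))) := by
  funext q
  simp only [W.mul_vec, W.inv_vec, W.mul_perm, W.inv_perm, Pi.add_apply, permAct,
    Pi.neg_apply, mul_inv_rev, Equiv.Perm.mul_apply, inv_inv, CharTwo.neg_eq]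

theorem inv_fix {n : ℕ} (σ : Equiv.Perm (Fin n)) (i : Fin n) (h : σ i = i) : σ⁻¹ i = i := by
  apply σ.injective; simp [h]

/-- for `n > 5` and `τ ∈ S_n` a single 3-cycle (cycle type
`(1^{n-3},3)`), if `a_i ≠ a_j` for some fixed points `i, j` of `τ`, then the
conjugacy class of `(a,τ)` in `H` (where `H` is `W n` or `K_n ⋊ S_n`) is of
type D. -/
theorem typeD_threecycle (n : ℕ) (hn : 5 < n) (τ : Equiv.Perm (Fin n))
    (hτ : τ.cycleType = {3})
    (a : Fin n → ZMod 2)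
    (hij : ∃ i j : Fin n, τ i = i ∧ τ j = j ∧ a i ≠ a j)
    (H : Subgroup (W n)) (hH : H = ⊤ ∨ H = Ksub n)
    (hw : W.mk a τ ∈ H) :
    IsTypeD (conjClass (⟨W.mk a τ, hw⟩ : H)) := by
  obtain ⟨i, j, hτi, hτj, haij⟩ := hij
  have hij' : i ≠ j := fun h => haij (by rw [h])
  have haji : a j = a i + 1 := by
    have h := haij; revert h
    generalize a i = p; generalize a j = q; revert p q; decide
  -- order of τ is 3
  have hord : orderOf τ = 3 := by
    rw [← Equiv.Perm.lcm_cycleType, hτ]; decide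
  have hτ3 : ∀ q, τ (τ (τ q)) = q := by
    intro q
    have h : τ ^ 3 = 1 := by rw [← hord]; exact pow_orderOf_eq_one τ
    have := Equiv.ext_iff.mp h q
    simpa [pow_succ, Equiv.Perm.mul_apply] using this
  have hτ1 : τ ≠ 1 := by
    intro h; rw [h, Equiv.Perm.cycleType_one] at hτ; exact absurd hτ (by decide)
  have hex : ∃ k, τ k ≠ k := by
    by_contra h; push_neg at h; exact hτ1 (Equiv.ext h)
  obtain ⟨k, hk⟩ := hex
  have hm1 : τ (τ k) ≠ τ k := fun h => hk (τ.injective h)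
  have hm2 : τ (τ (τ k)) ≠ τ (τ k) := fun h => hm1 (τ.injective h)
  have hk2k : τ (τ k) ≠ k := by
    intro h
    have h2 := congrArg τ h
    rw [hτ3 k] at h2
    exact hk h2.symm
  have hk2k1 : τ (τ k) ≠ τ k := hm1
  -- i and j are distinct from k, τ k, τ (τ k)
  have hki : k ≠ i := fun h => hk (by rw [h]; exact hτi)
  have hkj : k ≠ j := fun h => hk (by rw [h]; exact hτj)
  have hk1i : τ k ≠ i := fun h => hm1 (by rw [h]; exact hτi)
  have hk1j : τ k ≠ j := fun h => hm1 (by rw [h]; exact hτj)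
  have hk2i : τ (τ k) ≠ i := fun h => hm2 (by rw [h]; exact hτi)
  have hk2j : τ (τ k) ≠ j := fun h => hm2 (by rw [h]; exact hτj)
  -- inverse values of τ
  have hτinvi : τ⁻¹ i = i := inv_fix τ i hτi
  have hτinvj : τ⁻¹ j = j := inv_fix τ j hτj
  have hτinvk : τ⁻¹ k = τ (τ k) := by apply τ.injective; simp [hτ3 k]
  have hτinvk1 : τ⁻¹ (τ k) = k := by simp
  -- the conjugating element u = (e_k + e_i, swap i j)
  have hswapτ : Equiv.swap i j * τ * (Equiv.swap i j)⁻¹ = τ := by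
    rw [Equiv.swap_inv]
    ext p
    simp only [Equiv.Perm.mul_apply]
    rcases eq_or_ne p i with rfl | hpi
    · rw [Equiv.swap_apply_left, hτj, Equiv.swap_apply_right, hτi]
    rcases eq_or_ne p j with rfl | hpj
    · rw [Equiv.swap_apply_right, hτi, Equiv.swap_apply_left, hτj]
    rw [Equiv.swap_apply_of_ne_of_ne hpi hpj,
      Equiv.swap_apply_of_ne_of_ne (fun h => hpi (τ.injective (by rw [h, hτi])))
        (fun h => hpj (τ.injective (by rw [h, hτj])))]
  have hbu : ((W.mk (fun q => (if q = k then 1 else 0) + (if q = i then 1 else 0))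
      (Equiv.swap i j)) : W n) ∈ H := by
    rcases hH with rfl | rfl
    · trivial
    · show (∑ q, ((if q = k then (1:ZMod 2) else 0) + (if q = i then 1 else 0))) = 0
      rw [Finset.sum_add_distrib, Finset.sum_ite_eq' Finset.univ k fun _ => (1:ZMod 2),
        Finset.sum_ite_eq' Finset.univ i fun _ => (1:ZMod 2)]
      simp only [Finset.mem_univ, if_true]
      decide
  -- the conjugate vector a''
  have hconj : (W.mk (fun q => (if q = k then 1 else 0) + (if q = i then 1 else 0))
        (Equiv.swap i j)) * (W.mk a τ) *
        (W.mk (fun q => (if q = k then 1 else 0) + (if q = i then 1 else 0))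
        (Equiv.swap i j))⁻¹ =
      W.mk (fun q => a q + (if q = i then 1 else 0) + (if q = j then 1 else 0)
        + (if q = k then 1 else 0) + (if q = τ k then 1 else 0)) τ := by
    refine W.ext ?_ hswapτ
    rw [conj_vec]
    funext q
    show (if q = k then (1:ZMod 2) else 0) + (if q = i then 1 else 0)
        + a ((Equiv.swap i j)⁻¹ q)
        + ((if (Equiv.swap i j) (τ⁻¹ ((Equiv.swap i j)⁻¹ q)) = k then (1:ZMod 2) else 0)
          + (if (Equiv.swap i j) (τ⁻¹ ((Equiv.swap i j)⁻¹ q)) = i then 1 else 0)) = _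
    rw [Equiv.swap_inv]
    rcases eq_or_ne q i with heq | hqi
    · rw [heq, Equiv.swap_apply_left, hτinvj, Equiv.swap_apply_right]
      simp only [if_pos rfl, eq_self_iff_true, if_true, if_neg hki, if_neg hij'.symm, if_neg hki.symm, if_neg hk1i.symm,
        if_neg hij', haji]
      generalize a i = p; revert p; decide
    rcases eq_or_ne q j with heq | hqj
    · rw [heq, Equiv.swap_apply_right, hτinvi, Equiv.swap_apply_left]
      simp only [if_pos rfl, eq_self_iff_true, if_true, if_neg hkj, if_neg hij', if_neg hkj.symm, if_neg hk1j.symm,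
        if_neg hij'.symm, haji]
      generalize a i = p; revert p; decide
    rw [Equiv.swap_apply_of_ne_of_ne hqi hqj]
    rcases eq_or_ne q k with heq | hqk
    · rw [heq, hτinvk, Equiv.swap_apply_of_ne_of_ne hk2i hk2j]
      simp only [if_pos rfl, eq_self_iff_true, if_true, eq_self_iff_true, if_true, if_neg hki, if_neg hk2k, if_neg hk2i, if_neg hkj, if_neg hk.symm]
      generalize a k = p; revert p; decide
    rcases eq_or_ne q (τ k) with heq | hqk1
    · rw [heq, hτinvk1, Equiv.swap_apply_of_ne_of_ne hki hkj]
      simp only [if_pos rfl, eq_self_iff_true, if_true, if_neg hk, if_neg hk1i, if_neg hki, if_neg hk1j]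
      generalize a (τ k) = p; revert p; decide
    · have h1 : τ⁻¹ q ≠ i := fun h => hqi (by rw [← hτinvi] at h; exact τ⁻¹.injective h)
      have h2 : τ⁻¹ q ≠ j := fun h => hqj (by rw [← hτinvj] at h; exact τ⁻¹.injective h)
      have h3 : τ⁻¹ q ≠ k := fun h => hqk1 (by rw [← h]; exact (Equiv.apply_symm_apply τ q).symm)
      rw [Equiv.swap_apply_of_ne_of_ne h1 h2]
      simp only [if_neg hqk, if_neg hqi, if_neg h3, if_neg h1, if_neg hqj, if_neg hqk1]
      generalize a q = p; revert p; decide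
  -- abstract the conjugated vector
  have key : ∃ a2 : Fin n → ZMod 2,
      (W.mk (fun q => (if q = k then 1 else 0) + (if q = i then 1 else 0))
        (Equiv.swap i j)) * (W.mk a τ) *
      (W.mk (fun q => (if q = k then 1 else 0) + (if q = i then 1 else 0))
        (Equiv.swap i j))⁻¹ = W.mk a2 τ ∧
      a2 i = a i + 1 ∧ a2 (τ (τ k)) = a (τ (τ k)) ∧ a2 (τ k) = a (τ k) + 1 := by
    refine ⟨_, hconj, ?_, ?_, ?_⟩
    · simp only [if_pos rfl, eq_self_iff_true, if_true, if_neg hij', if_neg hki.symm,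
        if_neg hk1i.symm]
      ring
    · simp only [if_neg hk2i, if_neg hk2j, if_neg hk2k, if_neg hk2k1]
      ring
    · simp only [if_neg hk1i, if_neg hk1j, if_neg hk, eq_self_iff_true, if_true]
      ring
  obtain ⟨a2, hconj2, ha2i, ha2k2, ha2k1⟩ := key
  have hs : (W.mk a2 τ : W n) ∈ H := by
    rw [← hconj2]; exact mul_mem (mul_mem hbu hw) (inv_mem hbu)
  set X : H := (⟨W.mk a τ, hw⟩ : H) with hX
  set Y : H := (⟨W.mk a2 τ, hs⟩ : H) with hY
  set U : H := (⟨_, hbu⟩ : H) with hU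
  have hYU : Y = U * X * U⁻¹ := Subtype.ext hconj2.symm
  set P : H → Prop := fun t => (t : W n).perm i = i ∧ (t : W n).perm j = j with hP
  have Pmul : ∀ t t' : H, P t → P t' → P (t * t') := by
    rintro t t' ⟨h1, h2⟩ ⟨h3, h4⟩
    refine ⟨?_, ?_⟩
    · show ((t : W n) * (t' : W n)).perm i = i
      simp only [W.mul_perm, Equiv.Perm.mul_apply]; rw [h3, h1]
    · show ((t : W n) * (t' : W n)).perm j = j
      simp only [W.mul_perm, Equiv.Perm.mul_apply]; rw [h4, h2]
  have Pinv : ∀ t : H, P t → P t⁻¹ := by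
    rintro t ⟨h1, h2⟩
    exact ⟨inv_fix _ i h1, inv_fix _ j h2⟩
  have P1 : P 1 := ⟨rfl, rfl⟩
  have PX : P X := ⟨hτi, hτj⟩
  have PY : P Y := ⟨hτi, hτj⟩
  refine ⟨{z | ∃ t : H, P t ∧ z = t * X * t⁻¹}, {z | ∃ t : H, P t ∧ z = t * Y * t⁻¹},
    ?_, ?_, ?_, ?_, ?_, ?_, ?_, ?_, ?_⟩
  · rintro z ⟨t, -, rfl⟩; exact ⟨t, rfl⟩
  · rintro z ⟨t, -, rfl⟩; exact ⟨t * U, by rw [hYU]; group⟩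
  · exact ⟨X, 1, P1, by group⟩
  · exact ⟨Y, 1, P1, by group⟩
  · rw [Set.disjoint_left]
    rintro z ⟨t, ⟨hti, -⟩, rfl⟩ ⟨t', ⟨ht'i, -⟩, hz⟩
    have e1 : ((t * X * t⁻¹ : H) : W n).vec i = a i :=
      conj_fix i (t : W n) (X : W n) hti hτi
    have e2 : ((t' * Y * t'⁻¹ : H) : W n).vec i = a2 i :=
      conj_fix i (t' : W n) (Y : W n) ht'i hτi
    rw [← hz, e1, ha2i] at e2
    revert e2
    generalize a i = p; revert p; decide
  · rintro r ⟨t, ht, rfl⟩ r' ⟨t', ht', rfl⟩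
    exact ⟨t * X * t⁻¹ * t', Pmul _ _ (Pmul _ _ (Pmul _ _ ht PX) (Pinv _ ht)) ht',
      by rw [conjAct']; group⟩
  · rintro s ⟨t, ht, rfl⟩ s' ⟨t', ht', rfl⟩
    exact ⟨t * Y * t⁻¹ * t', Pmul _ _ (Pmul _ _ (Pmul _ _ ht PY) (Pinv _ ht)) ht',
      by rw [conjAct']; group⟩
  · rintro r ⟨t, ht, rfl⟩ s ⟨t', ht', rfl⟩
    constructor
    · exact ⟨t * X * t⁻¹ * t', Pmul _ _ (Pmul _ _ (Pmul _ _ ht PX) (Pinv _ ht)) ht',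
        by rw [conjAct']; group⟩
    · exact ⟨t' * Y * t'⁻¹ * t, Pmul _ _ (Pmul _ _ (Pmul _ _ ht' PY) (Pinv _ ht')) ht,
        by rw [conjAct']; group⟩
  · refine ⟨X, ⟨1, P1, by group⟩, Y, ⟨1, P1, by group⟩, ?_⟩
    intro hEq
    have h1 : sqD (W.mk a τ) (W.mk a2 τ) = W.mk a2 τ := Subtype.ext_iff.mp hEq
    rw [sq_same_perm τ hτ3] at h1
    have h3 := congrFun (congrArg W.vec h1) k
    revert h3
    simp only [permAct, Pi.add_apply, mul_inv_rev, Equiv.Perm.mul_apply, hτinvk,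
      perm_inv_apply_self, ha2k2, ha2k1]
    generalize a2 k = p
    generalize a (τ (τ k)) = q1
    generalize a (τ k) = q2
    revert p q1 q2; decide
end
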